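/- Let C be a commutative unital ring, R a nonzero C-algebra, and G a semigroup with zero. Then the following are equivalent: (1) the only central map δ : G → R with δ(0) = 0 is the zero map; (2) every f ∈ G satisfies f ~ 0; (3) \overline{CG} = [\overline{CG}, \overline{CG}]; (4) the only trace t : \overline{CG} → R is the zero map; (5) the only C-linear trace t : \overline{CG} → R is the zero map. -/

import Mathlib

/-- The one-step relation: `x = a*b` and `y = b*a`. -/
def simStep {G : Type*} [Mul G] (x y : G) : Prop := ∃ a b : G, x = a * b ∧ y = b * a

/-- The relation `~` on a semigroup: the reflexive-transitive closure of `simStep`. -/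
def sim {G : Type*} [Mul G] : G → G → Prop := Relation.ReflTransGen simStep

theorem sim_equiv {G : Type*} [Mul G] : Equivalence (sim (G := G)) :=
  ⟨fun _ => Relation.ReflTransGen.refl,
   fun h => by
      have : Std.Symm (simStep (G := G)) := ⟨fun _ _ ⟨a, b, h1, h2⟩ => ⟨b, a, h2, h1⟩⟩
      exact Std.Symm.symm (r := Relation.ReflTransGen simStep) _ _ h,
   fun h1 h2 => Relation.ReflTransGen.trans h1 h2⟩

/-- The setoid on `G` given by `~`. -/
def simSetoid (G : Type*) [Mul G] : Setoid G := ⟨sim, sim_equiv⟩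

/-- The additive subgroup `[A,A]` generated by commutators. -/
def commutatorSubgroup (A : Type*) [NonUnitalNonAssocRing A] : AddSubgroup A :=
  AddSubgroup.closure {x | ∃ a b : A, x = a * b - b * a}

/-- The ideal `I₀` of the semigroup ring `CG` consisting of functions supported in `{0}`. -/
noncomputable def I0 (C G : Type*) [CommRing C] [SemigroupWithZero G] :
    TwoSidedIdeal (MonoidAlgebra C G) :=
  TwoSidedIdeal.mk' {f : MonoidAlgebra C G | ∀ g : G, g ≠ 0 → f.coeff g = 0}
    (fun _ _ => rfl)
    (fun {x y} hx hy g hg => by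
      show (x + y).coeff g = 0
      rw [MonoidAlgebra.coeff_add, Finsupp.add_apply, hx g hg, hy g hg, add_zero])
    (fun {x} hx g hg => by
      show (-x).coeff g = 0
      rw [MonoidAlgebra.coeff_neg, Finsupp.neg_apply, hx g hg, neg_zero])
    (fun {x y} hy g hg => by
      classical
      rw [MonoidAlgebra.coeff_mul]
      rw [Finsupp.sum]
      refine Finset.sum_eq_zero fun a _ => ?_
      rw [Finsupp.sum]
      refine Finset.sum_eq_zero fun b hb => ?_
      have hb0 : b = 0 := by
        by_contra h
        exact Finsupp.mem_support_iff.mp hb (hy b h)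
      subst hb0
      rw [mul_zero, if_neg fun h => hg h.symm])
    (fun {x y} hx g hg => by
      classical
      rw [MonoidAlgebra.coeff_mul]
      rw [Finsupp.sum]
      refine Finset.sum_eq_zero fun a ha => ?_
      rw [Finsupp.sum]
      refine Finset.sum_eq_zero fun b _ => ?_
      have ha0 : a = 0 := by
        by_contra h
        exact Finsupp.mem_support_iff.mp ha (hx a h)
      subst ha0
      rw [zero_mul, if_neg fun h => hg h.symm])

/-- The contracted semigroup ring `\overline{CG} = CG / I₀`. -/
abbrev ContractedSemigroupRing (C G : Type*) [CommRing C] [SemigroupWithZero G] :=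
  (I0 C G).ringCon.Quotient

/-- The quotient map `π : CG → \overline{CG}`. -/
noncomputable def toCSR (C G : Type*) [CommRing C] [SemigroupWithZero G]
    (f : MonoidAlgebra C G) : ContractedSemigroupRing C G := f

/-- The map `f ↦ ∑_g f(g) • δ(g)` from `CG` to `R`. -/
def elemSum (C : Type*) {G R : Type*} [CommRing C] [SemigroupWithZero G]
    [AddCommMonoid R] [Module C R] (δ : G → R) (f : MonoidAlgebra C G) : R :=
  f.coeff.sum fun g c => c • δ g


section Aux

open MonoidAlgebra Finsupp

variable {C G R : Type*} [CommRing C] [SemigroupWithZero G]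
  [NonUnitalRing R] [Module C R]

lemma mem_I0_iff (f : MonoidAlgebra C G) :
    f ∈ I0 C G ↔ ∀ g : G, g ≠ 0 → f.coeff g = 0 :=
  TwoSidedIdeal.mem_mk' _ _ _ _ _ _ f

/-- `elemSum` as an additive monoid hom. -/
noncomputable def elemSumHom (δ : G → R) : MonoidAlgebra C G →+ R :=
  AddMonoidHom.mk' (elemSum C δ) fun f g => by
    unfold elemSum
    rw [MonoidAlgebra.coeff_add]
    exact Finsupp.sum_add_index' (fun a => zero_smul C (δ a))
      (fun a b₁ b₂ => add_smul b₁ b₂ (δ a))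

lemma elemSumHom_apply (δ : G → R) (f : MonoidAlgebra C G) :
    elemSumHom δ f = elemSum C δ f := rfl

lemma elemSum_single (δ : G → R) (g : G) (c : C) :
    elemSum C δ (MonoidAlgebra.single g c) = c • δ g := by
  unfold elemSum
  rw [MonoidAlgebra.coeff_single]
  exact Finsupp.sum_single_index (zero_smul C (δ g))

lemma elemSum_eq_zero_of_I0 (δ : G → R) (h0 : δ 0 = 0) {f : MonoidAlgebra C G}
    (hf : ∀ g : G, g ≠ 0 → f.coeff g = 0) : elemSum C δ f = 0 := by
  refine Finset.sum_eq_zero fun g _ => ?_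
  dsimp only
  by_cases h : g = 0
  · rw [h, h0, smul_zero]
  · rw [hf g h, zero_smul]

lemma elemSum_mul (δ : G → R) (hδ : ∀ g h : G, δ (g * h) = δ (h * g))
    (f f' : MonoidAlgebra C G) :
    elemSum C δ (f * f') = elemSum C δ (f' * f) := by
  rw [← elemSumHom_apply, ← elemSumHom_apply, MonoidAlgebra.mul_def,
    MonoidAlgebra.mul_def, map_finsuppSum, map_finsuppSum]
  simp only [map_finsuppSum, elemSumHom_apply, elemSum_single]
  simp only [Finsupp.sum]
  rw [Finset.sum_comm]
  refine Finset.sum_congr rfl fun b _ => Finset.sum_congr rfl fun a _ => ?_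
  rw [mul_comm, hδ]

lemma elemSum_smul (δ : G → R) (c : C) (f : MonoidAlgebra C G) :
    elemSum C δ (c • f) = c • elemSum C δ f := by
  unfold elemSum
  rw [MonoidAlgebra.coeff_smul, Finsupp.sum_smul_index' (fun a => zero_smul C (δ a)), Finsupp.smul_sum]
  exact Finset.sum_congr rfl fun g _ => (mul_smul c (f.coeff g) (δ g))

/-- The trace on the contracted semigroup ring induced by a central map `δ`. -/
noncomputable def liftTrace (δ : G → R) (h0 : δ 0 = 0) : ContractedSemigroupRing C G → R :=
  fun x => Quotient.liftOn' x (elemSum C δ) fun a b h => by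
    have h' : a - b ∈ I0 C G := (TwoSidedIdeal.rel_iff _ a b).mp h
    have h2 : elemSum C δ (a - b) = 0 :=
      elemSum_eq_zero_of_I0 δ h0 ((mem_I0_iff _).mp h')
    rw [← elemSumHom_apply, map_sub, elemSumHom_apply, elemSumHom_apply,
      sub_eq_zero] at h2
    exact h2

lemma liftTrace_coe (δ : G → R) (h0 : δ 0 = 0) (f : MonoidAlgebra C G) :
    liftTrace δ h0 (toCSR C G f) = elemSum C δ f := rfl

/-- The quotient map as an additive monoid hom. -/
noncomputable def coeAddHom : MonoidAlgebra C G →+ ContractedSemigroupRing C G :=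
  AddMonoidHom.mk' (toCSR C G) fun a b => RingCon.coe_add _ a b

lemma toCSR_mul (a b : MonoidAlgebra C G) :
    toCSR C G (a * b) = toCSR C G a * toCSR C G b := rfl

lemma coe_single_zero (c : C) :
    toCSR C G (MonoidAlgebra.single (0 : G) c) = 0 := by
  have h00 : (0 : ContractedSemigroupRing C G) = toCSR C G 0 := rfl
  rw [h00, toCSR, toCSR, RingCon.eq, TwoSidedIdeal.rel_iff, sub_zero, mem_I0_iff]
  intro g hg
  exact Finsupp.single_eq_of_ne' (Ne.symm hg)

lemma sub_mem_comm_of_simStep {x y : G} (h : simStep x y) (c : C) :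
    toCSR C G (MonoidAlgebra.single x c) - toCSR C G (MonoidAlgebra.single y c) ∈
      commutatorSubgroup (ContractedSemigroupRing C G) := by
  obtain ⟨a, b, rfl, rfl⟩ := h
  apply AddSubgroup.subset_closure
  have e1 : MonoidAlgebra.single a c * MonoidAlgebra.single b (1 : C) =
      MonoidAlgebra.single (a * b) c := by
    rw [MonoidAlgebra.single_mul_single, mul_one]
  have e2 : MonoidAlgebra.single b (1 : C) * MonoidAlgebra.single a c =
      MonoidAlgebra.single (b * a) c := by
    rw [MonoidAlgebra.single_mul_single, one_mul]
  refine ⟨toCSR C G (MonoidAlgebra.single a c),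
    toCSR C G (MonoidAlgebra.single b 1), ?_⟩
  rw [← toCSR_mul, ← toCSR_mul, e1, e2]

lemma sub_mem_comm_of_sim {x y : G} (h : sim x y) (c : C) :
    toCSR C G (MonoidAlgebra.single x c) - toCSR C G (MonoidAlgebra.single y c) ∈
      commutatorSubgroup (ContractedSemigroupRing C G) := by
  induction h with
  | refl => simpa using zero_mem _
  | tail _ hstep ih =>
      have h2 := add_mem ih (sub_mem_comm_of_simStep hstep c)
      rwa [sub_add_sub_cancel] at h2

end Aux

/-- For a commutative unital ring `C`, a nonzero `C`-algebra `R`, and a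
semigroup with zero `G`, the following are equivalent:
(1) the only central zero-preserving map `G → R` is zero;
(2) every `f ∈ G` satisfies `f ~ 0`;
(3) `\overline{CG} = [\overline{CG}, \overline{CG}]`;
(4) the only trace `\overline{CG} → R` is zero;
(5) the only `C`-linear trace `\overline{CG} → R` is zero. -/
theorem semigroupRing_commutator_tfae
    {C G R : Type*} [CommRing C] [SemigroupWithZero G]
    [NonUnitalRing R] [Module C R] [SMulCommClass C R R] [IsScalarTower C R R]
    [Nontrivial R] :
    List.TFAE
      [∀ δ : G → R, (∀ g h : G, δ (g * h) = δ (h * g)) → δ 0 = 0 → ∀ g : G, δ g = 0,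
       ∀ f : G, sim f 0,
       ∀ x : ContractedSemigroupRing C G,
         x ∈ commutatorSubgroup (ContractedSemigroupRing C G),
       ∀ t : ContractedSemigroupRing C G → R,
         (∀ x y, t (x + y) = t x + t y) → (∀ x y, t (x * y) = t (y * x)) →
         ∀ x, t x = 0,
       ∀ t : ContractedSemigroupRing C G → R,
         (∀ x y, t (x + y) = t x + t y) → (∀ x y, t (x * y) = t (y * x)) →
         (∀ (c : C) (f : MonoidAlgebra C G),
           t (toCSR C G (c • f)) = c • t (toCSR C G f)) →
         ∀ x, t x = 0] := by
  tfae_have 1 → 2 := by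
    intro h1 f
    by_contra hf
    classical
    obtain ⟨r, hr⟩ := exists_ne (0 : R)
    set δ : G → R := fun g => if sim g f then r else 0 with hδ
    have hcent : ∀ g h : G, δ (g * h) = δ (h * g) := by
      intro g h
      have hsim : sim (g * h) (h * g) :=
        Relation.ReflTransGen.single ⟨g, h, rfl, rfl⟩
      simp only [hδ]
      congr 1
      exact propext ⟨fun hx => sim_equiv.trans (sim_equiv.symm hsim) hx,
        fun hx => sim_equiv.trans hsim hx⟩
    have h0 : δ 0 = 0 := by
      simp only [hδ]
      rw [if_neg]
      intro h0f
      exact hf (sim_equiv.symm h0f)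
    have := h1 δ hcent h0 f
    rw [hδ] at this
    simp only [if_pos (sim_equiv.refl f)] at this
    exact hr this
  tfae_have 2 → 3 := by
    intro h2 x
    induction x using Quotient.inductionOn with
    | h f =>
      show coeAddHom f ∈ _
      have hf : coeAddHom f =
          (f.coeff.support).sum fun g => coeAddHom (MonoidAlgebra.single g (f.coeff g)) := by
        conv_lhs => rw [← MonoidAlgebra.sum_coeff_single f]
        rw [map_finsuppSum]
        rfl
      rw [hf]
      refine AddSubgroup.sum_mem _ fun g _ => ?_
      have h := sub_mem_comm_of_sim (h2 g) (f.coeff g)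
      rw [coe_single_zero, sub_zero] at h
      exact h
  tfae_have 3 → 4 := by
    intro h3 t h1 h2 x
    set T : ContractedSemigroupRing C G →+ R := AddMonoidHom.mk' t h1 with hT
    have hTt : ∀ y, T y = t y := fun _ => rfl
    rw [← hTt]
    refine AddSubgroup.closure_induction (fun y hy => ?_) (map_zero T)
      (fun a b _ _ ha hb => by rw [map_add, ha, hb, add_zero])
      (fun a _ ha => by rw [map_neg, ha, neg_zero]) (h3 x)
    obtain ⟨a, b, rfl⟩ := hy
    rw [map_sub, hTt, hTt, h2, sub_self]
  tfae_have 4 → 5 := fun h4 t h1 h2 _ => h4 t h1 h2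
  tfae_have 5 → 1 := by
    intro h5 δ hcent h0 g
    have hz := h5 (liftTrace δ h0)
      (fun x y => Quotient.inductionOn₂ x y fun a b => by
        show liftTrace δ h0 (toCSR C G (a + b)) =
          liftTrace δ h0 (toCSR C G a) + liftTrace δ h0 (toCSR C G b)
        rw [liftTrace_coe, liftTrace_coe, liftTrace_coe]
        exact map_add (elemSumHom δ) a b)
      (fun x y => Quotient.inductionOn₂ x y fun a b => by
        show liftTrace δ h0 (toCSR C G (a * b)) =
          liftTrace δ h0 (toCSR C G (b * a))
        rw [liftTrace_coe, liftTrace_coe]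
        exact elemSum_mul δ hcent a b)
      (fun c f => by
        rw [liftTrace_coe, liftTrace_coe]
        exact elemSum_smul δ c f)
      (toCSR C G (MonoidAlgebra.single g 1))
    rw [liftTrace_coe, elemSum_single, one_smul] at hz
    exact hz
  tfae_finish
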